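/- If m ≥ 2 and f ≥ 1 are integers with n = m + f - 1 such that ∑_{i=m}^{n} 1/i < 1 < ∑_{i=m}^{n+1} 1/i, then f = ⌊m(e-1) - e/2⌋ or f = ⌊m(e-1) - e/2⌋ + 1. -/

import Mathlib

open Finset

lemma tele (g : ℕ → ℝ) (m n : ℕ) (h : m ≤ n + 1) :
    ∑ i ∈ Finset.Icc m n, (g (i + 1) - g i) = g (n + 1) - g m := by
  rw [← Finset.Ico_add_one_right_eq_Icc, Finset.sum_Ico_eq_sum_range]
  set G : ℕ → ℝ := fun j => g (m + j) with hG
  calc ∑ j ∈ Finset.range (n + 1 - m), (g (m + j + 1) - g (m + j))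
      = ∑ j ∈ Finset.range (n + 1 - m), (G (j + 1) - G j) := by
        apply Finset.sum_congr rfl; intro j _; simp [hG, Nat.add_assoc]
    _ = G (n + 1 - m) - G 0 := Finset.sum_range_sub G _
    _ = g (n + 1) - g m := by simp [hG, Nat.add_sub_cancel' h]

lemma exp_quad_ub {x : ℝ} (h0 : 0 ≤ x) (h1 : x ≤ 1) :
    Real.exp x ≤ 1 + x + x ^ 2 / 2 + (2 / 9) * x ^ 3 := by
  have hb := Real.exp_bound (by rw [abs_of_nonneg h0]; exact h1) (n := 3) (by norm_num)
  rw [abs_of_nonneg h0] at hb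
  have h2 := (abs_le.mp hb).2
  have hs : ∑ m ∈ Finset.range 3, x ^ m / m.factorial = 1 + x + x ^ 2 / 2 := by
    norm_num [Finset.sum_range_succ, Nat.factorial]
  rw [hs] at h2
  norm_num [Nat.factorial] at h2
  nlinarith [h2]

lemma exp_quad_lb {x : ℝ} (h0 : 0 ≤ x) (h1 : x ≤ 1) :
    1 + x + x ^ 2 / 2 - (2 / 9) * x ^ 3 ≤ Real.exp x := by
  have hb := Real.exp_bound (by rw [abs_of_nonneg h0]; exact h1) (n := 3) (by norm_num)
  rw [abs_of_nonneg h0] at hb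
  have h2 := (abs_le.mp hb).1
  have hs : ∑ m ∈ Finset.range 3, x ^ m / m.factorial = 1 + x + x ^ 2 / 2 := by
    norm_num [Finset.sum_range_succ, Nat.factorial]
  rw [hs] at h2
  norm_num [Nat.factorial] at h2
  nlinarith [h2]

lemma pade_lb {u : ℝ} (hu0 : 0 < u) (hu1 : u ≤ 1) :
    Real.exp u ≤ (2 + u) / (2 - u) := by
  have h1 := exp_quad_ub hu0.le hu1
  have h2 : 1 + u + u ^ 2 / 2 + (2 / 9) * u ^ 3 ≤ (2 + u) / (2 - u) := by
    rw [le_div_iff₀ (by linarith : (0:ℝ) < 2 - u)]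
    nlinarith [pow_pos hu0 3, pow_pos hu0 4]
  linarith

lemma pade_ub {u : ℝ} (hu0 : 0 < u) (hu1 : u ≤ 1 / 2) :
    (2 + u) / (2 - u) ≤ Real.exp (u + (3 / 4) * u ^ 3) := by
  have hb2 : u ^ 2 ≤ u / 2 := by nlinarith
  have hb4 : u ^ 4 ≤ u / 8 := by nlinarith
  have hb6 : u ^ 6 ≤ u / 32 := by nlinarith
  have hs0 : (0:ℝ) ≤ u + (3 / 4) * u ^ 3 := by positivity
  have hs1 : u + (3 / 4) * u ^ 3 ≤ 1 := by nlinarith [pow_nonneg hu0.le 3]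
  have h1 := exp_quad_lb hs0 hs1
  have hq : 0 ≤ 5/9 + (35/36)*u - (7/4)*u^2 + (17/16)*u^3 - (33/32)*u^4
      + (3/8)*u^5 - (3/16)*u^6 + (3/32)*u^7 := by
    nlinarith [hb2, hb4, hb6, pow_nonneg hu0.le 3, pow_nonneg hu0.le 5,
      pow_nonneg hu0.le 7]
  have hkey : 0 ≤ u^3 * (5/9 + (35/36)*u - (7/4)*u^2 + (17/16)*u^3 - (33/32)*u^4
      + (3/8)*u^5 - (3/16)*u^6 + (3/32)*u^7) :=
    mul_nonneg (pow_nonneg hu0.le 3) hq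
  have expand : (1 + (u + (3/4) * u^3) + (u + (3/4) * u^3) ^ 2 / 2
        - (2 / 9) * (u + (3/4) * u^3) ^ 3) * (2 - u) - (2 + u)
      = u^3 * (5/9 + (35/36)*u - (7/4)*u^2 + (17/16)*u^3 - (33/32)*u^4
      + (3/8)*u^5 - (3/16)*u^6 + (3/32)*u^7) := by ring
  have h2 : (2 + u) / (2 - u) ≤ 1 + (u + (3/4) * u^3) + (u + (3/4) * u^3) ^ 2 / 2
      - (2 / 9) * (u + (3/4) * u^3) ^ 3 := by
    rw [div_le_iff₀ (by linarith : (0:ℝ) < 2 - u)]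
    linarith [hkey, expand.ge, expand.le]
  linarith

lemma log_diff_lower {i : ℕ} (hi : 1 ≤ i) :
    1 / (i : ℝ) ≤ Real.log (2 * (i : ℝ) + 1) - Real.log (2 * (i : ℝ) - 1) := by
  have hx : (1 : ℝ) ≤ (i : ℝ) := by exact_mod_cast hi
  have hx0 : (0 : ℝ) < (i : ℝ) := by linarith
  have hd1 : (0 : ℝ) < 2 * (i : ℝ) - 1 := by linarith
  have hd2 : (0 : ℝ) < 2 * (i : ℝ) + 1 := by linarith
  rw [← Real.log_div (by linarith) (by linarith),
    Real.le_log_iff_exp_le (div_pos hd2 hd1)]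
  have hu0 : 0 < 1 / (i : ℝ) := by positivity
  have hu1 : 1 / (i : ℝ) ≤ 1 := by rw [div_le_one hx0]; linarith
  have heq : (2 * (i : ℝ) + 1) / (2 * (i : ℝ) - 1)
      = (2 + 1 / (i : ℝ)) / (2 - 1 / (i : ℝ)) := by
    have hne : (0:ℝ) < 2 - 1 / (i : ℝ) := by linarith
    rw [div_eq_div_iff hd1.ne' hne.ne']
    field_simp
  rw [heq]
  exact pade_lb hu0 hu1

lemma log_diff_upper {i : ℕ} (hi : 2 ≤ i) :
    Real.log (2 * (i : ℝ) + 1) - Real.log (2 * (i : ℝ) - 1)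
      ≤ 1 / (i : ℝ) + (3 / 4) / (i : ℝ) ^ 3 := by
  have hx : (2 : ℝ) ≤ (i : ℝ) := by exact_mod_cast hi
  have hx0 : (0 : ℝ) < (i : ℝ) := by linarith
  have hd1 : (0 : ℝ) < 2 * (i : ℝ) - 1 := by linarith
  have hd2 : (0 : ℝ) < 2 * (i : ℝ) + 1 := by linarith
  rw [← Real.log_div (by linarith) (by linarith),
    Real.log_le_iff_le_exp (div_pos hd2 hd1)]
  have hu0 : 0 < 1 / (i : ℝ) := by positivity
  have hu1 : 1 / (i : ℝ) ≤ 1 / 2 := by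
    rw [div_le_div_iff₀ hx0 (by norm_num)]; linarith
  have heq : (2 * (i : ℝ) + 1) / (2 * (i : ℝ) - 1)
      = (2 + 1 / (i : ℝ)) / (2 - 1 / (i : ℝ)) := by
    have hne : (0:ℝ) < 2 - 1 / (i : ℝ) := by linarith
    rw [div_eq_div_iff hd1.ne' hne.ne']
    field_simp
  have hsu : 1 / (i : ℝ) + (3 / 4) / (i : ℝ) ^ 3
      = 1 / (i : ℝ) + (3 / 4) * (1 / (i : ℝ)) ^ 3 := by
    field_simp
  rw [heq, hsu]
  exact pade_ub hu0 hu1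

noncomputable def glog (i : ℕ) : ℝ := Real.log (2 * (i : ℝ) - 1)

noncomputable def gcube (i : ℕ) : ℝ := -((3 : ℝ) / 8) / ((i : ℝ) - 1 / 2) ^ 2

lemma glog_step {i : ℕ} (hi : 1 ≤ i) : 1 / (i : ℝ) ≤ glog (i + 1) - glog i := by
  have := log_diff_lower hi
  have hc : ((i + 1 : ℕ) : ℝ) = (i : ℝ) + 1 := by push_cast; ring
  unfold glog
  rw [hc]
  calc 1 / (i:ℝ) ≤ Real.log (2 * (i:ℝ) + 1) - Real.log (2 * (i:ℝ) - 1) := this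
    _ = Real.log (2 * ((i:ℝ) + 1) - 1) - Real.log (2 * (i:ℝ) - 1) := by ring_nf

lemma glog_step' {i : ℕ} (hi : 2 ≤ i) :
    glog (i + 1) - glog i ≤ 1 / (i : ℝ) + (3 / 4) / (i : ℝ) ^ 3 := by
  have := log_diff_upper hi
  have hc : ((i + 1 : ℕ) : ℝ) = (i : ℝ) + 1 := by push_cast; ring
  unfold glog
  rw [hc]
  calc Real.log (2 * ((i:ℝ) + 1) - 1) - Real.log (2 * (i:ℝ) - 1)
      = Real.log (2 * (i:ℝ) + 1) - Real.log (2 * (i:ℝ) - 1) := by ring_nf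
    _ ≤ 1 / (i : ℝ) + (3 / 4) / (i : ℝ) ^ 3 := this

lemma gcube_step {i : ℕ} (hi : 1 ≤ i) :
    (3 / 4) / (i : ℝ) ^ 3 ≤ gcube (i + 1) - gcube i := by
  have hx : (1 : ℝ) ≤ (i : ℝ) := by exact_mod_cast hi
  have hc : ((i + 1 : ℕ) : ℝ) = (i : ℝ) + 1 := by push_cast; ring
  unfold gcube
  rw [hc]
  have h1 : (0:ℝ) < (i:ℝ) - 1/2 := by linarith
  have h2 : (0:ℝ) < (i:ℝ) + 1 - 1/2 := by linarith
  have h3 : (0:ℝ) < (i:ℝ) := by linarith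
  have hne1 : ((i:ℝ) - 1/2)^2 ≠ 0 := by positivity
  have hne2 : ((i:ℝ) + 1/2)^2 ≠ 0 := by positivity
  have key : (3/4) / (i:ℝ)^3 ≤ (3:ℝ)/8 / ((i:ℝ) - 1/2)^2 - (3:ℝ)/8 / ((i:ℝ) + 1/2)^2 := by
    rw [div_sub_div _ _ hne1 hne2, div_le_div_iff₀ (by positivity) (by positivity)]
    nlinarith [sq_nonneg ((i:ℝ))]
  have e2 : -((3:ℝ)/8) / (((i:ℝ)+1) - 1/2)^2 - (-((3:ℝ)/8) / ((i:ℝ) - 1/2)^2)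
      = (3:ℝ)/8 / ((i:ℝ) - 1/2)^2 - (3:ℝ)/8 / ((i:ℝ) + 1/2)^2 := by
    have e3 : ((i:ℝ)+1) - 1/2 = (i:ℝ) + 1/2 := by ring
    rw [e3]
    ring
  linarith [key, e2.le, e2.ge]

lemma cube_sum (m n : ℕ) (hm : 1 ≤ m) :
    ∑ i ∈ Finset.Icc m n, (3 / 4) / (i : ℝ) ^ 3 ≤ 3 / (8 * ((m : ℝ) - 1 / 2) ^ 2) := by
  rcases le_or_gt m (n + 1) with h | h
  · have step : ∑ i ∈ Finset.Icc m n, (3 / 4) / (i : ℝ) ^ 3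
        ≤ ∑ i ∈ Finset.Icc m n, (gcube (i + 1) - gcube i) := by
      apply Finset.sum_le_sum
      intro i hi
      exact gcube_step (le_trans hm (Finset.mem_Icc.mp hi).1)
    rw [tele gcube m n h] at step
    have hm1 : (1:ℝ) ≤ (m:ℝ) := by exact_mod_cast hm
    have hlast : gcube (n + 1) ≤ 0 := by
      unfold gcube
      exact div_nonpos_of_nonpos_of_nonneg (by norm_num) (sq_nonneg _)
    have hgm : -gcube m = 3 / (8 * ((m : ℝ) - 1 / 2) ^ 2) := by
      unfold gcube
      field_simp
    linarith [step, hlast, hgm.ge, hgm.le]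
  · rw [Finset.Icc_eq_empty (by omega), Finset.sum_empty]
    have hm1 : (1:ℝ) ≤ (m:ℝ) := by exact_mod_cast hm
    have h2 : (0:ℝ) < 8 * ((m:ℝ) - 1/2)^2 := by nlinarith
    positivity

set_option maxHeartbeats 1000000 in
theorem stmt8 (m f n : ℕ) (hm : 2 ≤ m) (hf : 1 ≤ f) (hn : n = m + f - 1)
    (h1 : (∑ i ∈ Finset.Icc m n, (1 : ℝ) / i) < 1)
    (h2 : (1 : ℝ) < ∑ i ∈ Finset.Icc m (n + 1), (1 : ℝ) / i) :
    (f : ℤ) = ⌊(m : ℝ) * (Real.exp 1 - 1) - Real.exp 1 / 2⌋ ∨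
    (f : ℤ) = ⌊(m : ℝ) * (Real.exp 1 - 1) - Real.exp 1 / 2⌋ + 1 := by
  have hE1 : Real.exp 1 < 2.7182818286 := Real.exp_one_lt_d9
  have hE0 : (2:ℝ) ≤ Real.exp 1 := by
    have := Real.add_one_le_exp (1:ℝ); linarith
  set E := Real.exp 1 with hEdef
  set X : ℝ := (m : ℝ) * (E - 1) - E / 2 with hXdef
  have hNr : (n : ℝ) = (m:ℝ) + (f:ℝ) - 1 := by
    rw [hn, Nat.cast_sub (by omega : 1 ≤ m + f)]
    push_cast; ring
  have hMr : (2:ℝ) ≤ (m:ℝ) := by exact_mod_cast hm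
  have hFr : (1:ℝ) ≤ (f:ℝ) := by exact_mod_cast hf
  -- Side A : ⌊X⌋ ≤ f
  have hA : ⌊X⌋ ≤ (f:ℤ) := by
    have step : ∑ i ∈ Finset.Icc m (n+1), (1:ℝ)/i
        ≤ ∑ i ∈ Finset.Icc m (n+1), (glog (i+1) - glog i) := by
      apply Finset.sum_le_sum
      intro i hi
      exact glog_step (by have := (Finset.mem_Icc.mp hi).1; omega)
    rw [tele glog m (n+1) (by omega)] at step
    have hlog : (1:ℝ) < glog (n+1+1) - glog m := lt_of_lt_of_le h2 step
    have hc : ((n+1+1:ℕ):ℝ) = (n:ℝ) + 2 := by push_cast; ring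
    have hd1 : (0:ℝ) < 2*(m:ℝ) - 1 := by linarith
    have hn0 : (0:ℝ) ≤ (n:ℝ) := Nat.cast_nonneg n
    unfold glog at hlog
    rw [hc, ← Real.log_div (by linarith) (by linarith)] at hlog
    have hexp : E < (2*((n:ℝ)+2)-1)/(2*(m:ℝ)-1) := by
      rw [hEdef]
      exact (Real.lt_log_iff_exp_lt (div_pos (by linarith) hd1)).mp hlog
    rw [lt_div_iff₀ hd1] at hexp
    rw [hNr] at hexp
    have hXf : X < ((f:ℝ) + 1) := by rw [hXdef]; nlinarith
    have h := Int.floor_lt.mpr (show X < (((f:ℤ)+1 : ℤ) : ℝ) by push_cast; exact hXf)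
    omega
  -- Side B : f - 1 ≤ ⌊X⌋
  have hB : (f:ℤ) - 1 ≤ ⌊X⌋ := by
    rcases eq_or_lt_of_le hm with hm2 | hm3
    · -- m = 2
      have hf2 : f ≤ 2 := by
        by_contra hh
        push_neg at hh
        have hsub : Finset.Icc 2 4 ⊆ Finset.Icc m n := by
          intro a ha
          rw [Finset.mem_Icc] at ha ⊢
          omega
        have hle : ∑ i ∈ (Finset.Icc 2 4 : Finset ℕ), (1:ℝ)/i ≤ ∑ i ∈ Finset.Icc m n, (1:ℝ)/i :=
          Finset.sum_le_sum_of_subset_of_nonneg hsub (by intro i _ _; positivity)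
        have hev : ∑ i ∈ (Finset.Icc 2 4 : Finset ℕ), (1:ℝ)/i = 13/12 := by
          rw [show Finset.Icc 2 4 = {2, 3, 4} from rfl]
          norm_num [Finset.sum_insert, Finset.mem_insert]
        linarith
      have hX1 : (1:ℝ) ≤ X := by rw [hXdef]; nlinarith
      have h1f : (1:ℤ) ≤ ⌊X⌋ := by
        rw [Int.le_floor]; exact_mod_cast hX1
      have hfz : (f:ℤ) ≤ 2 := by exact_mod_cast hf2
      omega
    · -- 3 ≤ m
      have hm3' : (3:ℝ) ≤ (m:ℝ) := by exact_mod_cast hm3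
      have step : ∑ i ∈ Finset.Icc m n, (glog (i+1) - glog i)
          ≤ ∑ i ∈ Finset.Icc m n, ((1:ℝ)/i + (3/4)/(i:ℝ)^3) := by
        apply Finset.sum_le_sum
        intro i hi
        exact glog_step' (by have := (Finset.mem_Icc.mp hi).1; omega)
      rw [tele glog m n (by omega), Finset.sum_add_distrib] at step
      have hcs := cube_sum m n (by omega)
      set C : ℝ := 3/(8*((m:ℝ)-1/2)^2) with hC
      have hlog : glog (n+1) - glog m < 1 + C := by linarith
      have hc : ((n+1:ℕ):ℝ) = (n:ℝ)+1 := by push_cast; ring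
      have hd1 : (0:ℝ) < 2*(m:ℝ)-1 := by linarith
      have hn0 : (0:ℝ) ≤ (n:ℝ) := Nat.cast_nonneg n
      unfold glog at hlog
      rw [hc, ← Real.log_div (by linarith) (by linarith)] at hlog
      have hexp : (2*((n:ℝ)+1)-1)/(2*(m:ℝ)-1) < Real.exp (1 + C) :=
        (Real.log_lt_iff_lt_exp (div_pos (by linarith) hd1)).mp hlog
      rw [div_lt_iff₀ hd1, Real.exp_add] at hexp
      have hw : (5/2:ℝ) ≤ (m:ℝ) - 1/2 := by linarith
      have hw0 : (0:ℝ) < (m:ℝ) - 1/2 := by linarith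
      have hden : (0:ℝ) < 8*((m:ℝ)-1/2)^2 := by nlinarith
      have hCpos : 0 < C := by rw [hC]; exact div_pos (by norm_num) hden
      have hCle : C ≤ 3/50 := by
        rw [hC, div_le_div_iff₀ (by positivity) (by norm_num)]
        nlinarith
      have hecb : Real.exp C ≤ 1 + (50/47) * C := by
        have hneg := Real.add_one_le_exp (-C)
        rw [Real.exp_neg] at hneg
        have hpos := Real.exp_pos C
        have hkey : (1 - C) * Real.exp C ≤ 1 := by
          calc (1-C) * Real.exp C ≤ (Real.exp C)⁻¹ * Real.exp C := by
                apply mul_le_mul_of_nonneg_right _ hpos.le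
                linarith
            _ = 1 := inv_mul_cancel₀ hpos.ne'
        nlinarith [hkey, hCpos, hCle, hpos]
      have hCval : C * (8*((m:ℝ)-1/2)^2) = 3 := by
        rw [hC]; exact div_mul_cancel₀ 3 hden.ne'
      have hAC : (2*(m:ℝ)-1) * C ≤ 3/10 := by
        nlinarith [hCval, hw, hCpos, mul_nonneg (mul_nonneg hCpos.le hw0.le)
          (by linarith : (0:ℝ) ≤ 2*((m:ℝ)-1/2) - 5)]
      have hEp : (0:ℝ) < E := by linarith
      have hq1 : (0:ℝ) ≤ (2*(m:ℝ)-1) * E := by nlinarith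
      have hq2 : (2*(m:ℝ)-1) * (E * Real.exp C)
          ≤ (2*(m:ℝ)-1)*E + E * ((2*(m:ℝ)-1) * C) * (50/47) := by
        nlinarith [mul_le_mul_of_nonneg_left hecb hq1]
      have hq3 : E * ((2*(m:ℝ)-1) * C) * (50/47) ≤ E * (3/10) * (50/47) := by
        nlinarith [mul_le_mul_of_nonneg_left hAC (by linarith : (0:ℝ) ≤ E * (50/47))]
      have hq4 : E * (3/10) * (50/47) < 1 := by nlinarith [hE1]
      rw [hNr] at hexp
      have hfX : (f:ℝ) < X + 1 := by rw [hXdef]; nlinarith [hexp, hq2, hq3, hq4]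
      rw [Int.le_floor]
      push_cast
      linarith
  set k := ⌊X⌋ with hk
  omega
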